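/- Let $A$ be an $n \times n$ positive definite Hermitian matrix with eigenvalues $\mu_1,\dots,\mu_n > 0$ and $n \geq 2$. Then the matrix $B = \frac{1}{n-1}\big((\operatorname{tr} A^{-1}) I - A^{-1}\big)$ is positive definite and $\det B \geq \det(A^{-1})$. -/

import Mathlib

open Matrix ComplexOrder

section Aux
open Finset

lemma amgm_key (n : ℕ) (hn : 2 ≤ n) (μ : Fin n → ℝ) (hμ : ∀ i, 0 < μ i) :
    ∏ i, μ i ≤ ∏ i, ((∑ k, μ k) - μ i) / ((n : ℝ) - 1) := by
  have hn1 : (0:ℝ) < (n:ℝ) - 1 := by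
    have : (2:ℝ) ≤ n := by exact_mod_cast hn
    linarith
  set w : ℝ := ((n:ℝ) - 1)⁻¹ with hw
  have hcard : ∀ i : Fin n, (Finset.univ.erase i).card = n - 1 := fun i => by
    rw [Finset.card_erase_of_mem (Finset.mem_univ i), Finset.card_univ, Fintype.card_fin]
  have hcast : ((n - 1 : ℕ) : ℝ) = (n:ℝ) - 1 := by
    rw [Nat.cast_sub (by omega)]; norm_num
  have herase_sum : ∀ i : Fin n, (∑ k, μ k) - μ i = ∑ k ∈ Finset.univ.erase i, μ k := fun i =>
    (Finset.sum_erase_eq_sub (Finset.mem_univ i)).symm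
  have key : ∀ i : Fin n, ∏ k ∈ Finset.univ.erase i, μ k ^ w ≤ ((∑ k, μ k) - μ i) / ((n:ℝ) - 1) := by
    intro i
    have h := Real.geom_mean_le_arith_mean_weighted (Finset.univ.erase i) (fun _ => w) μ
      (fun _ _ => by positivity)
      (by rw [Finset.sum_const, hcard i, nsmul_eq_mul, hcast, hw, mul_inv_cancel₀ hn1.ne'])
      (fun k _ => (hμ k).le)
    calc ∏ k ∈ Finset.univ.erase i, μ k ^ w ≤ ∑ k ∈ Finset.univ.erase i, w * μ k := h
      _ = ((∑ k, μ k) - μ i) / ((n:ℝ) - 1) := by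
          rw [← Finset.mul_sum, ← herase_sum i, hw, div_eq_inv_mul]
  have hfpos : ∀ i : Fin n, 0 < μ i ^ w := fun i => Real.rpow_pos_of_pos (hμ i) w
  have hprod_pos : 0 < ∏ i, μ i ^ w := Finset.prod_pos fun i _ => hfpos i
  have hf : ∀ i : Fin n, (μ i ^ w) ^ (n - 1) = μ i := by
    intro i
    rw [← Real.rpow_natCast (μ i ^ w) (n-1), ← Real.rpow_mul (hμ i).le, hcast, hw,
      inv_mul_cancel₀ hn1.ne', Real.rpow_one]
  calc ∏ i, μ i = ∏ i : Fin n, (μ i ^ w) ^ (n - 1) := by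
        exact Finset.prod_congr rfl fun i _ => (hf i).symm
    _ = (∏ i, μ i ^ w) ^ (n - 1) := by rw [Finset.prod_pow]
    _ = ∏ i : Fin n, (∏ k, μ k ^ w) / (μ i ^ w) := by
        rw [Finset.prod_div_distrib, Finset.prod_const, Finset.card_univ, Fintype.card_fin,
          pow_sub₀ _ hprod_pos.ne' (by omega : 1 ≤ n), pow_one, div_eq_mul_inv]
    _ ≤ ∏ i, ((∑ k, μ k) - μ i) / ((n:ℝ) - 1) := by
        apply Finset.prod_le_prod
        · exact fun i _ => (div_pos hprod_pos (hfpos i)).le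
        · intro i _
          have herase : ∏ k ∈ Finset.univ.erase i, μ k ^ w = (∏ k, μ k ^ w) / (μ i ^ w) := by
            rw [eq_div_iff (hfpos i).ne', mul_comm]
            exact Finset.mul_prod_erase Finset.univ (fun k => μ k ^ w) (Finset.mem_univ i)
          rw [← herase]
          exact key i

end Aux

lemma posDef_conj_unitary {n : ℕ} {D U : Matrix (Fin n) (Fin n) ℂ} (hD : D.PosDef)
    (hU : U * star U = 1) : (U * D * star U).PosDef := by
  rw [Matrix.posDef_iff_dotProduct_mulVec]
  constructor
  · have h := Matrix.isHermitian_conjTranspose_mul_mul (star U) hD.1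
    simpa [Matrix.star_eq_conjTranspose] using h
  · intro x hx
    have hy : star U *ᵥ x ≠ 0 := by
      intro h0
      apply hx
      have hxx : U *ᵥ (star U *ᵥ x) = x := by
        rw [Matrix.mulVec_mulVec, hU, Matrix.one_mulVec]
      rw [h0, Matrix.mulVec_zero] at hxx
      exact hxx.symm
    have key : star x ⬝ᵥ ((U * D * star U) *ᵥ x)
        = star (star U *ᵥ x) ⬝ᵥ (D *ᵥ (star U *ᵥ x)) := by
      rw [← Matrix.mulVec_mulVec, ← Matrix.mulVec_mulVec, Matrix.dotProduct_mulVec (star x) U,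
        Matrix.star_mulVec, Matrix.star_eq_conjTranspose, Matrix.conjTranspose_conjTranspose]
    rw [key]
    exact hD.dotProduct_mulVec_pos hy

theorem stmt_6 (n : ℕ) (hn : 2 ≤ n) (A : Matrix (Fin n) (Fin n) ℂ)
    (hA : A.PosDef) :
    ((((n : ℂ) - 1)⁻¹ • ((A⁻¹.trace • (1 : Matrix (Fin n) (Fin n) ℂ)) - A⁻¹))).PosDef ∧
    (A⁻¹.det).re ≤
      ((((n : ℂ) - 1)⁻¹ • ((A⁻¹.trace • (1 : Matrix (Fin n) (Fin n) ℂ)) - A⁻¹))).det.re := by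
  have hM : (A⁻¹).PosDef := hA.inv
  have h : (A⁻¹).IsHermitian := hM.1
  have hμpos : ∀ i, 0 < h.eigenvalues i := hM.eigenvalues_pos
  set μ : Fin n → ℝ := h.eigenvalues with hμdef
  set U : Matrix (Fin n) (Fin n) ℂ := (h.eigenvectorUnitary : Matrix (Fin n) (Fin n) ℂ) with hUdef
  have hU : U * star U = 1 := mem_unitaryGroup_iff.mp h.eigenvectorUnitary.2
  have hU' : star U * U = 1 := mem_unitaryGroup_iff'.mp h.eigenvectorUnitary.2
  have hspec : A⁻¹ = U * diagonal (RCLike.ofReal ∘ μ) * star U := h.spectral_theorem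
  have hn1 : (0:ℝ) < (n:ℝ) - 1 := by
    have : (2:ℝ) ≤ n := by exact_mod_cast hn
    linarith
  have htr : (A⁻¹).trace = ((∑ k, μ k : ℝ) : ℂ) := by
    conv_lhs => rw [hspec]
    rw [trace_mul_cycle, hU', one_mul, trace_diagonal]
    push_cast
    rfl
  set dr : Fin n → ℝ := fun i => ((∑ k, μ k) - μ i) / ((n:ℝ) - 1) with hdrdef
  have hdpos : ∀ i, 0 < dr i := by
    intro i
    apply div_pos _ hn1
    have he : (∑ k, μ k) - μ i = ∑ k ∈ Finset.univ.erase i, μ k :=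
      (Finset.sum_erase_eq_sub (Finset.mem_univ i)).symm
    rw [he]
    apply Finset.sum_pos (fun k _ => hμpos k)
    rw [← Finset.card_pos, Finset.card_erase_of_mem (Finset.mem_univ i), Finset.card_univ,
      Fintype.card_fin]
    omega
  have hB : ((n:ℂ) - 1)⁻¹ • ((A⁻¹.trace • (1 : Matrix (Fin n) (Fin n) ℂ)) - A⁻¹)
      = U * diagonal (fun i => (dr i : ℂ)) * star U := by
    have h1 : A⁻¹.trace • (1 : Matrix (Fin n) (Fin n) ℂ) - A⁻¹
        = U * diagonal (fun i => (((∑ k, μ k) - μ i : ℝ) : ℂ)) * star U := by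
      have h2 : A⁻¹.trace • (1 : Matrix (Fin n) (Fin n) ℂ)
          = U * (((∑ k, μ k : ℝ) : ℂ) • (1 : Matrix (Fin n) (Fin n) ℂ)) * star U := by
        rw [htr, Matrix.mul_smul, Matrix.smul_mul, mul_one, hU]
      conv_lhs => rw [h2, hspec]
      rw [← Matrix.sub_mul, ← Matrix.mul_sub]
      congr 1
      congr 1
      ext i j
      by_cases hij : i = j <;>
        simp [Matrix.diagonal, hij, Matrix.one_apply, Function.comp]
    rw [h1, ← Matrix.smul_mul, ← Matrix.mul_smul, ← Matrix.diagonal_smul]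
    have heq : ((n:ℂ) - 1)⁻¹ • (fun i => (((∑ k, μ k) - μ i : ℝ) : ℂ))
        = fun i => (dr i : ℂ) := by
      funext i
      simp only [Pi.smul_apply, smul_eq_mul, hdrdef]
      push_cast
      ring
    rw [heq]
  constructor
  · rw [hB]
    refine posDef_conj_unitary (Matrix.posDef_diagonal_iff.mpr fun i => ?_) hU
    exact_mod_cast Complex.zero_lt_real.mpr (hdpos i)
  · rw [hB]
    have hdet1 : (A⁻¹).det = ((∏ i, μ i : ℝ) : ℂ) := by
      rw [h.det_eq_prod_eigenvalues]
      push_cast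
      rfl
    have hdet2 : (U * diagonal (fun i => (dr i : ℂ)) * star U).det = ((∏ i, dr i : ℝ) : ℂ) := by
      rw [Matrix.det_mul_right_comm, hU, one_mul, det_diagonal]
      push_cast
      rfl
    rw [hdet1, hdet2, Complex.ofReal_re, Complex.ofReal_re]
    exact amgm_key n hn μ hμpos
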